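/- arXiv:1102.5587 — 2 statements merged into one kernel-verified Lean document; each statement's English description precedes it below -/
import Mathlib

section
/- For the one-dimensional simple symmetric random walk, the probability c^{(2n)}(2k) that in the time interval from 0 to 2n a walker starting at the origin spends exactly 2k time units on the positive side equals (1/2)^{2n} * binom(2k, k) * binom(2(n-k), n-k), for 0 ≤ k ≤ n. -/
/-- Position of the walk after `m` steps, where `s i = true` means a `+1` step. -/
def walkPos {N : ℕ} (s : Fin N → Bool) (m : ℕ) : ℤ :=
  ∑ i ∈ Finset.range m, if h : i < N then (if s ⟨i, h⟩ then 1 else -1) else 0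

/-- Number of time units `[m, m+1]`, `0 ≤ m < N`, spent on the positive side
(Feller's convention: the unit counts if at least one endpoint is at a positive position). -/
def sojournTime {N : ℕ} (s : Fin N → Bool) : ℕ :=
  ((Finset.range N).filter (fun m => 0 < walkPos s m ∨ 0 < walkPos s (m + 1))).card

open Finset

namespace RW

/-- step of `s` at time `i`, as a function of `ℕ`. -/
def stepAt {N : ℕ} (s : Fin N → Bool) (i : ℕ) : ℤ :=
  if h : i < N then (if s ⟨i, h⟩ then 1 else -1) else 0

lemma walkPos_eq {N : ℕ} (s : Fin N → Bool) (m : ℕ) :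
    walkPos s m = ∑ i ∈ range m, stepAt s i := rfl

lemma walkPos_zero {N : ℕ} (s : Fin N → Bool) : walkPos s 0 = 0 := by
  simp [walkPos_eq]

lemma walkPos_succ {N : ℕ} (s : Fin N → Bool) (m : ℕ) :
    walkPos s (m + 1) = walkPos s m + stepAt s m := by
  simp [walkPos_eq, Finset.sum_range_succ]

lemma stepAt_bounds {N : ℕ} (s : Fin N → Bool) (i : ℕ) :
    -1 ≤ stepAt s i ∧ stepAt s i ≤ 1 := by
  unfold stepAt; split <;> [skip; simp]
  split <;> simp

lemma walkPos_succ_ge {N : ℕ} (s : Fin N → Bool) (m : ℕ) :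
    walkPos s m - 1 ≤ walkPos s (m + 1) := by
  have := (stepAt_bounds s m).1
  rw [walkPos_succ]; omega

lemma walkPos_succ_le {N : ℕ} (s : Fin N → Bool) (m : ℕ) :
    walkPos s (m + 1) ≤ walkPos s m + 1 := by
  have := (stepAt_bounds s m).2
  rw [walkPos_succ]; omega

lemma stepAt_ne_zero {N : ℕ} (s : Fin N → Bool) {i : ℕ} (h : i < N) :
    stepAt s i = 1 ∨ stepAt s i = -1 := by
  unfold stepAt; rw [dif_pos h]; split <;> simp

/-- parity: `walkPos s m + m` is even, for `m ≤ N`. -/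
lemma walkPos_parity {N : ℕ} (s : Fin N → Bool) {m : ℕ} (hm : m ≤ N) :
    Even (walkPos s m + m) := by
  induction m with
  | zero => simp [walkPos_zero]
  | succ m ih =>
    have hm' : m < N := by omega
    have ih' := ih (by omega)
    rcases ih' with ⟨c, hc⟩
    rcases stepAt_ne_zero s hm' with h | h
    · rw [walkPos_succ, h]
      exact ⟨c + 1, by push_cast at hc ⊢; linarith⟩
    · rw [walkPos_succ, h]
      exact ⟨c, by push_cast at hc ⊢; linarith⟩

lemma walkPos_odd_ne_zero {N : ℕ} (s : Fin N → Bool) {m : ℕ} (hm : m ≤ N) (hodd : m % 2 = 1) :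
    walkPos s m ≠ 0 := by
  intro h
  have := walkPos_parity s hm
  rw [h, zero_add] at this
  rcases this with ⟨c, hc⟩
  omega

lemma even_pos_ge_two {N : ℕ} (s : Fin N → Bool) {m : ℕ} (hm : m ≤ N) (heven : m % 2 = 0)
    (hpos : 0 < walkPos s m) : 2 ≤ walkPos s m := by
  rcases walkPos_parity s hm with ⟨c, hc⟩
  omega

/-- sign propagation: if positions in `(a,b]` are nonzero and position `a+1` is positive,
then all positions in `(a,b]` are positive. -/
lemma sign_prop {N : ℕ} (s : Fin N → Bool) {a b : ℕ}
    (hne : ∀ m, a < m → m ≤ b → walkPos s m ≠ 0)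
    (h1 : 0 < walkPos s (a + 1)) :
    ∀ m, a < m → m ≤ b → 0 < walkPos s m := by
  intro m ham hmb
  induction m with
  | zero => omega
  | succ m ih =>
    rcases Nat.lt_or_ge a m with ha | ha
    · have hm : 0 < walkPos s m := ih ha (by omega)
      have := walkPos_succ_ge s m
      have hne' := hne (m+1) (by omega) hmb
      omega
    · have : a = m := by omega
      subst this; exact h1

/-! ### Appending and splitting walks -/

/-- append two walks, with a proof that lengths add up to `N`. -/
def wapp {a b N : ℕ} (h : a + b = N) (e : Fin a → Bool) (t : Fin b → Bool) :
    Fin N → Bool :=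
  fun i => if h2 : (i : ℕ) < a then e ⟨i, h2⟩ else t ⟨(i : ℕ) - a, by omega⟩

def spl1 {a N : ℕ} (ha : a ≤ N) (s : Fin N → Bool) : Fin a → Bool :=
  fun i => s ⟨i, by omega⟩

def spl2 {a b N : ℕ} (h : a + b = N) (s : Fin N → Bool) : Fin b → Bool :=
  fun i => s ⟨a + i, by omega⟩

lemma stepAt_wapp {a b N : ℕ} (h : a + b = N) (e : Fin a → Bool) (t : Fin b → Bool) (i : ℕ) :
    stepAt (wapp h e t) i = if i < a then stepAt e i else stepAt t (i - a) := by
  rcases Nat.lt_or_ge i a with hia | hia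
  · rw [if_pos hia]
    simp only [stepAt, wapp, dif_pos (show i < N by omega), Fin.val_mk, dif_pos hia]
  · rw [if_neg (by omega)]
    rcases Nat.lt_or_ge i N with hiN | hiN
    · simp only [stepAt, wapp, dif_pos hiN, Fin.val_mk,
        dif_neg (show ¬ i < a by omega), dif_pos (show i - a < b by omega)]
    · simp only [stepAt, dif_neg (show ¬ i < N by omega),
        dif_neg (show ¬ i - a < b by omega)]

lemma walkPos_wapp_left {a b N : ℕ} (h : a + b = N) (e : Fin a → Bool) (t : Fin b → Bool)
    {m : ℕ} (hm : m ≤ a) : walkPos (wapp h e t) m = walkPos e m := by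
  rw [walkPos_eq, walkPos_eq]
  refine Finset.sum_congr rfl fun i hi => ?_
  rw [Finset.mem_range] at hi
  rw [stepAt_wapp, if_pos (by omega)]

lemma walkPos_wapp_right {a b N : ℕ} (h : a + b = N) (e : Fin a → Bool) (t : Fin b → Bool)
    (u : ℕ) : walkPos (wapp h e t) (a + u) = walkPos e a + walkPos t u := by
  induction u with
  | zero => rw [Nat.add_zero, walkPos_zero, add_zero, walkPos_wapp_left h e t le_rfl]
  | succ u ih =>
    rw [← Nat.add_assoc, walkPos_succ, ih, walkPos_succ, stepAt_wapp,
      if_neg (by omega), Nat.add_sub_cancel_left]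
    ring

lemma wapp_spl {a b N : ℕ} (h : a + b = N) (ha : a ≤ N) (s : Fin N → Bool) :
    wapp h (spl1 ha s) (spl2 h s) = s := by
  funext i
  rcases Nat.lt_or_ge (i : ℕ) a with hia | hia
  · simp only [wapp, spl1, dif_pos hia]
  · simp only [wapp, spl2, dif_neg (by omega : ¬((i : ℕ) < a))]
    exact congrArg s (by ext; simp; omega)

lemma spl1_wapp {a b N : ℕ} (h : a + b = N) (ha : a ≤ N) (e : Fin a → Bool) (t : Fin b → Bool) :
    spl1 ha (wapp h e t) = e := by
  funext i
  simp only [spl1, wapp, Fin.val_mk, dif_pos i.isLt]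

lemma spl2_wapp {a b N : ℕ} (h : a + b = N) (e : Fin a → Bool) (t : Fin b → Bool) :
    spl2 h (wapp h e t) = t := by
  funext i
  simp only [spl2, wapp, Fin.val_mk, dif_neg (by omega : ¬(a + (i : ℕ) < a))]
  exact congrArg t (by ext; simp)

lemma walkPos_spl1 {a N : ℕ} (ha : a ≤ N) (s : Fin N → Bool) {m : ℕ} (hm : m ≤ a) :
    walkPos (spl1 ha s) m = walkPos s m := by
  rw [walkPos_eq, walkPos_eq]
  refine Finset.sum_congr rfl fun i hi => ?_
  rw [Finset.mem_range] at hi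
  unfold stepAt spl1
  rw [dif_pos (by omega : i < a), dif_pos (by omega : i < N)]

lemma walkPos_spl2 {a b N : ℕ} (h : a + b = N) (s : Fin N → Bool) (u : ℕ) :
    walkPos s (a + u) = walkPos s a + walkPos (spl2 h s) u := by
  conv_lhs => rw [← wapp_spl h (by omega) s]
  rw [walkPos_wapp_right, walkPos_spl1]
  omega

/-! ### Negation -/

def wneg {N : ℕ} (s : Fin N → Bool) : Fin N → Bool := fun i => !(s i)

lemma walkPos_wneg {N : ℕ} (s : Fin N → Bool) (m : ℕ) :
    walkPos (wneg s) m = -walkPos s m := by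
  rw [walkPos_eq, walkPos_eq, ← Finset.sum_neg_distrib]
  refine Finset.sum_congr rfl fun i hi => ?_
  unfold stepAt wneg
  split
  · split <;> simp_all
  · simp

lemma wneg_wneg {N : ℕ} (s : Fin N → Bool) : wneg (wneg s) = s := by
  funext i; simp [wneg]

lemma card_filter_wneg {N : ℕ} (p : (Fin N → Bool) → Prop) [DecidablePred p] :
    (Finset.univ.filter p).card = (Finset.univ.filter (fun s => p (wneg s))).card := by
  refine Finset.card_nbij' (fun s => wneg s) (fun s => wneg s) ?_ ?_ ?_ ?_
  · intro s hs
    simp only [Finset.mem_coe, Finset.mem_filter, Finset.mem_univ, true_and] at hs ⊢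
    rw [wneg_wneg]; exact hs
  · intro s hs
    simp only [Finset.mem_coe, Finset.mem_filter, Finset.mem_univ, true_and] at hs ⊢
    exact hs
  · intro s _; exact wneg_wneg s
  · intro s _; exact wneg_wneg s

/-! ### odd-time positivity count and relation to sojourn time -/

/-- number of odd times `2j+1`, `j < N/2`, where the walk is positive. -/
def oddCnt {N : ℕ} (s : Fin N → Bool) : ℕ :=
  ((Finset.range (N / 2)).filter (fun j => 0 < walkPos s (2 * j + 1))).card

lemma sum_range_two_mul {M : Type*} [AddCommMonoid M] (f : ℕ → M) (n : ℕ) :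
    ∑ m ∈ range (2 * n), f m = ∑ j ∈ range n, (f (2 * j) + f (2 * j + 1)) := by
  induction n with
  | zero => simp
  | succ n ih =>
    rw [Finset.sum_range_succ, ← ih, show 2 * (n + 1) = (2 * n + 1) + 1 by ring,
      Finset.sum_range_succ, Finset.sum_range_succ, add_assoc]

lemma sojourn_eq_two_mul_oddCnt {n : ℕ} (s : Fin (2 * n) → Bool) :
    sojournTime s = 2 * oddCnt s := by
  have key : ∀ j, j < n →
      ((0 < walkPos s (2 * j) ∨ 0 < walkPos s (2 * j + 1)) ↔ 0 < walkPos s (2 * j + 1)) ∧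
      ((0 < walkPos s (2 * j + 1) ∨ 0 < walkPos s (2 * j + 1 + 1)) ↔
        0 < walkPos s (2 * j + 1)) := by
    intro j hj
    constructor
    · constructor
      · rintro (h | h)
        · have h2 := even_pos_ge_two s (show 2 * j ≤ 2 * n by omega) (by omega) h
          have := walkPos_succ_ge s (2 * j)
          omega
        · exact h
      · exact Or.inr
    · constructor
      · rintro (h | h)
        · exact h
        · have h2 := even_pos_ge_two s (show 2 * j + 1 + 1 ≤ 2 * n by omega) (by omega) h
          have := walkPos_succ_le s (2 * j + 1)
          omega
      · exact Or.inl
  unfold sojournTime oddCnt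
  rw [Finset.card_filter, Finset.card_filter, sum_range_two_mul, Finset.mul_sum]
  rw [show (2 * n) / 2 = n by omega]
  refine Finset.sum_congr rfl fun j hj => ?_
  rw [Finset.mem_range] at hj
  rcases key j hj with ⟨h1, h2⟩
  by_cases hp : 0 < walkPos s (2 * j + 1)
  · rw [if_pos (h1.mpr hp), if_pos (by tauto), if_pos hp]; norm_num
  · rw [if_neg (fun hc => hp (h1.mp hc)), if_neg (fun hc => hp (h2.mp hc)), if_neg hp]
    norm_num

lemma oddCnt_le {N : ℕ} (s : Fin N → Bool) : oddCnt s ≤ N / 2 := by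
  unfold oddCnt
  calc _ ≤ (Finset.range (N / 2)).card := Finset.card_filter_le _ _
    _ = N / 2 := Finset.card_range _

lemma oddCnt_wneg {n : ℕ} (s : Fin (2 * n) → Bool) : oddCnt (wneg s) = n - oddCnt s := by
  unfold oddCnt
  rw [show (2 * n) / 2 = n by omega]
  have : (Finset.range n).filter (fun j => 0 < walkPos (wneg s) (2 * j + 1))
      = Finset.range n \ (Finset.range n).filter (fun j => 0 < walkPos s (2 * j + 1)) := by
    ext j
    simp only [Finset.mem_filter, Finset.mem_sdiff, Finset.mem_range]
    constructor
    · rintro ⟨hj, hpos⟩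
      rw [walkPos_wneg] at hpos
      exact ⟨hj, fun h => by omega⟩
    · rintro ⟨hj, hnpos⟩
      refine ⟨hj, ?_⟩
      rw [walkPos_wneg]
      have hne := walkPos_odd_ne_zero s (show 2 * j + 1 ≤ 2 * n by omega) (by omega)
      push_neg at hnpos
      have h := hnpos hj
      omega
  rw [this, Finset.card_sdiff_of_subset (Finset.filter_subset _ _), Finset.card_range]

/-! ### excursions -/

/-- positive strict excursions of length `2r`. -/
def ExcP (r : ℕ) : Finset (Fin (2 * r) → Bool) :=
  Finset.univ.filter (fun e => (∀ m, m < 2 * r → 0 < m → 0 < walkPos e m) ∧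
    walkPos e (2 * r) = 0)

def ExcN (r : ℕ) : Finset (Fin (2 * r) → Bool) :=
  Finset.univ.filter (fun e => (∀ m, m < 2 * r → 0 < m → walkPos e m < 0) ∧
    walkPos e (2 * r) = 0)

def Exc (r : ℕ) : Finset (Fin (2 * r) → Bool) :=
  Finset.univ.filter (fun e => (∀ m, m < 2 * r → 0 < m → walkPos e m ≠ 0) ∧
    walkPos e (2 * r) = 0)

lemma Exc_eq_union {r : ℕ} (hr : 1 ≤ r) : Exc r = ExcP r ∪ ExcN r := by
    ext e
    simp only [Exc, ExcP, ExcN, Finset.mem_filter, Finset.mem_union, Finset.mem_univ, true_and]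
    constructor
    · rintro ⟨hne, hz⟩
      have h1 : walkPos e 1 ≠ 0 := hne 1 (by omega) (by omega)
      rcases lt_or_gt_of_ne h1 with hneg | hpos
      · right
        refine ⟨fun m hm h0 => ?_, hz⟩
        have hposn : 0 < walkPos (wneg e) (0 + 1) := by
          rw [show (0 : ℕ) + 1 = 1 from rfl, walkPos_wneg]; omega
        have := sign_prop (wneg e) (a := 0) (b := 2 * r - 1)
          (fun m' h0' hb' => by rw [walkPos_wneg]; have := hne m' (by omega) h0'; omega)
          hposn m h0 (by omega)
        rw [walkPos_wneg] at this; omega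
      · left
        refine ⟨fun m hm h0 => ?_, hz⟩
        exact sign_prop e (a := 0) (b := 2 * r - 1)
          (fun m' h0' hb' => hne m' (by omega) h0')
          (by rw [show (0 : ℕ) + 1 = 1 from rfl]; omega) m h0 (by omega)
    · rintro (⟨hp, hz⟩ | ⟨hp, hz⟩)
      · exact ⟨fun m hm h0 => by have := hp m hm h0; omega, hz⟩
      · exact ⟨fun m hm h0 => by have := hp m hm h0; omega, hz⟩

lemma Exc_disjoint {r : ℕ} (hr : 1 ≤ r) : Disjoint (ExcP r) (ExcN r) := by
    rw [Finset.disjoint_left]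
    intro e heP heN
    simp only [ExcP, ExcN, Finset.mem_filter] at heP heN
    have h1 := heP.2.1 1 (by omega) (by omega)
    have h2 := heN.2.1 1 (by omega) (by omega)
    omega

lemma ExcN_card (r : ℕ) : (ExcN r).card = (ExcP r).card := by
    unfold ExcN ExcP
    rw [card_filter_wneg (fun e => (∀ m, m < 2 * r → 0 < m → 0 < walkPos e m) ∧
      walkPos e (2 * r) = 0)]
    congr 1
    ext e
    simp only [Finset.mem_filter]
    constructor
    · rintro ⟨hu, hp, hz⟩
      refine ⟨hu, fun m hm h0 => ?_, ?_⟩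
      · rw [walkPos_wneg]; have := hp m hm h0; omega
      · rw [walkPos_wneg]; omega
    · rintro ⟨hu, hp, hz⟩
      rw [walkPos_wneg] at hz
      refine ⟨hu, fun m hm h0 => ?_, by omega⟩
      have := hp m hm h0
      rw [walkPos_wneg] at this
      omega

lemma Exc_card {r : ℕ} (hr : 1 ≤ r) : (Exc r).card = 2 * (ExcP r).card := by
  rw [Exc_eq_union hr, Finset.card_union_of_disjoint (Exc_disjoint hr), ExcN_card]
  omega

/-! ### first return partition -/

/-- first return to zero happens at time `2r`. -/
def frspec {N : ℕ} (s : Fin N → Bool) (r : ℕ) : Prop :=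
  walkPos s (2 * r) = 0 ∧ ∀ r', r' < r → 0 < r' → walkPos s (2 * r') ≠ 0

instance {N : ℕ} (s : Fin N → Bool) (r : ℕ) : Decidable (frspec s r) := by
  unfold frspec; infer_instance

/-- no return to zero at any even time `2r`, `1 ≤ r ≤ n`. -/
def noZero {N : ℕ} (s : Fin N → Bool) (n : ℕ) : Prop :=
  ∀ r, r ≤ n → 0 < r → walkPos s (2 * r) ≠ 0

instance {N : ℕ} (s : Fin N → Bool) (n : ℕ) : Decidable (noZero s n) := by
  unfold noZero; infer_instance

/-- Partition of the count of walks satisfying `P` according to the first return to `0`. -/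
lemma card_partition {n : ℕ} (P : (Fin (2 * n) → Bool) → Prop) [DecidablePred P] :
    (Finset.univ.filter P).card
      = (Finset.univ.filter (fun s => P s ∧ noZero s n)).card
        + ∑ r ∈ Finset.Icc 1 n, (Finset.univ.filter (fun s => P s ∧ frspec s r)).card := by
  classical
  have hsplit := Finset.card_filter_add_card_filter_not
    (s := Finset.univ.filter P) (p := fun s => noZero s n)
  rw [Finset.filter_filter, Finset.filter_filter] at hsplit
  have h2 : ((Finset.univ.filter (fun s => P s ∧ ¬ noZero s n))).card
      = ∑ r ∈ Finset.Icc 1 n, (Finset.univ.filter (fun s => P s ∧ frspec s r)).card := by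
    set Z : (Fin (2 * n) → Bool) → Finset ℕ :=
      fun s => (Finset.Icc 1 n).filter (fun r => walkPos s (2 * r) = 0) with hZ
    set fr : (Fin (2 * n) → Bool) → ℕ :=
      fun s => if h : (Z s).Nonempty then (Z s).min' h else 0 with hfr
    have hZne : ∀ s : Fin (2 * n) → Bool, ¬ noZero s n → (Z s).Nonempty := by
      intro s hnz
      unfold noZero at hnz
      push_neg at hnz
      rcases hnz with ⟨r, hrn, hr0, hrz⟩
      exact ⟨r, by simp only [hZ, Finset.mem_filter, Finset.mem_Icc]; omega⟩
    have hmem : ∀ s ∈ Finset.univ.filter (fun s => P s ∧ ¬ noZero s n),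
        fr s ∈ Finset.Icc 1 n := by
      intro s hs
      simp only [Finset.mem_filter, Finset.mem_univ, true_and] at hs
      have hne := hZne s hs.2
      rw [hfr]
      simp only [dif_pos hne]
      exact Finset.mem_of_mem_filter _ ((Z s).min'_mem hne)
    rw [Finset.card_eq_sum_card_fiberwise hmem]
    refine Finset.sum_congr rfl fun r hr => ?_
    congr 1
    ext s
    rw [Finset.mem_Icc] at hr
    simp only [Finset.mem_filter, Finset.mem_univ, true_and]
    constructor
    · rintro ⟨⟨hP, hnz⟩, hfrs⟩
      have hne := hZne s hnz
      rw [hfr] at hfrs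
      simp only [dif_pos hne] at hfrs
      refine ⟨hP, ?_, ?_⟩
      · have := (Z s).min'_mem hne
        rw [hfrs] at this
        simp only [hZ, Finset.mem_filter] at this
        exact this.2
      · intro r' hr' h0' hz'
        have hmem' : r' ∈ Z s := by
          simp only [hZ, Finset.mem_filter, Finset.mem_Icc]
          exact ⟨⟨h0', by omega⟩, hz'⟩
        have := (Z s).min'_le r' hmem'
        omega
    · rintro ⟨hP, hz, hmin⟩
      have hrZ : r ∈ Z s := by
        simp only [hZ, Finset.mem_filter, Finset.mem_Icc]
        exact ⟨⟨hr.1, hr.2⟩, hz⟩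
      have hne : (Z s).Nonempty := ⟨r, hrZ⟩
      refine ⟨⟨hP, ?_⟩, ?_⟩
      · unfold noZero
        push_neg
        exact ⟨r, hr.2, hr.1, hz⟩
      · rw [hfr]
        simp only [dif_pos hne]
        have hle := (Z s).min'_le r hrZ
        have hmm := (Z s).min'_mem hne
        simp only [hZ, Finset.mem_filter, Finset.mem_Icc] at hmm
        rcases Nat.lt_or_ge ((Z s).min' hne) r with hlt | hge
        · exact absurd hmm.2 (hmin _ hlt (by omega))
        · omega
  omega

lemma card_filter_product {α β : Type*} [Fintype β] (A : Finset α) (Q : α → β → Prop)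
    [∀ a b, Decidable (Q a b)] :
    ((A ×ˢ (Finset.univ : Finset β)).filter (fun p => Q p.1 p.2)).card
      = ∑ a ∈ A, (Finset.univ.filter (fun b => Q a b)).card := by
  rw [Finset.card_filter, Finset.sum_product]
  refine Finset.sum_congr rfl fun a _ => ?_
  rw [Finset.card_filter]

/-- decomposition at the first return: counting walks with first return at `2r`. -/
lemma card_fr_decomp {n r : ℕ} (hr1 : 1 ≤ r) (hrn : r ≤ n)
    (h : 2 * r + 2 * (n - r) = 2 * n)
    (P : (Fin (2 * n) → Bool) → Prop) [DecidablePred P] :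
    (Finset.univ.filter (fun s => P s ∧ frspec s r)).card
      = ∑ e ∈ Exc r, (Finset.univ.filter
          (fun t : Fin (2 * (n - r)) → Bool => P (wapp h e t))).card := by
  classical
  rw [← card_filter_product (Exc r) (fun e t => P (wapp h e t))]
  refine Finset.card_nbij' (fun s => (spl1 (by omega) s, spl2 h s))
    (fun p => wapp h p.1 p.2) ?_ ?_ ?_ ?_
  · intro s hs
    simp only [Finset.mem_coe, Finset.mem_filter, Finset.mem_univ, true_and] at hs
    rcases hs with ⟨hP, hz, hmin⟩
    simp only [Finset.mem_coe, Finset.mem_filter, Finset.mem_product, Finset.mem_univ, and_true]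
    constructor
    · simp only [Exc, Finset.mem_filter, Finset.mem_univ, true_and]
      constructor
      · intro m hm h0
        rw [walkPos_spl1 (by omega) s (by omega)]
        rcases Nat.even_or_odd m with ⟨c, hc⟩ | ⟨c, hc⟩
        · intro hzz
          exact hmin c (by omega) (by omega) (by rw [show 2 * c = m by omega]; exact hzz)
        · exact walkPos_odd_ne_zero s (by omega) (by omega)
      · rw [walkPos_spl1 (by omega) s le_rfl]; exact hz
    · rw [wapp_spl h (by omega) s]; exact hP
  · intro p hp
    simp only [Finset.mem_coe, Finset.mem_filter, Finset.mem_product, Finset.mem_univ, and_true] at hp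
    rcases hp with ⟨heE, hP⟩
    simp only [Exc, Finset.mem_filter, Finset.mem_univ, true_and] at heE
    simp only [Finset.mem_coe, Finset.mem_filter, Finset.mem_univ, true_and]
    refine ⟨hP, ?_, ?_⟩
    · rw [walkPos_wapp_left h _ _ le_rfl]; exact heE.2
    · intro r' hr' h0'
      rw [walkPos_wapp_left h _ _ (by omega)]
      exact heE.1 (2 * r') (by omega) (by omega)
  · intro s _
    exact wapp_spl h (by omega) s
  · intro p _
    simp only [spl1_wapp, spl2_wapp]

/-! ### oddCnt under decomposition -/

lemma sum_range_add {M : Type*} [AddCommMonoid M] (f : ℕ → M) (a b : ℕ) :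
    ∑ i ∈ range (a + b), f i = (∑ i ∈ range a, f i) + ∑ i ∈ range b, f (a + i) := by
  induction b with
  | zero => simp
  | succ b ih =>
    rw [← Nat.add_assoc, Finset.sum_range_succ, ih, Finset.sum_range_succ, add_assoc]

lemma oddCnt_eq_sum {N : ℕ} (s : Fin N → Bool) :
    oddCnt s = ∑ j ∈ range (N / 2), if 0 < walkPos s (2 * j + 1) then 1 else 0 := by
  rw [oddCnt, Finset.card_filter]

lemma oddCnt_wapp_posExc {n r : ℕ} (hrn : r ≤ n) (h : 2 * r + 2 * (n - r) = 2 * n)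
    {e : Fin (2 * r) → Bool} (he : e ∈ ExcP r) (t : Fin (2 * (n - r)) → Bool) :
    oddCnt (wapp h e t) = r + oddCnt t := by
  simp only [ExcP, Finset.mem_filter, Finset.mem_univ, true_and] at he
  rw [oddCnt_eq_sum, oddCnt_eq_sum,
    show (2 * n) / 2 = r + (n - r) by omega, sum_range_add]
  congr 1
  · rw [Finset.sum_congr rfl (g := fun _ => (1 : ℕ)) fun j hj => ?_, Finset.sum_const,
      Finset.card_range, smul_eq_mul, mul_one]
    rw [Finset.mem_range] at hj
    rw [if_pos]
    rw [walkPos_wapp_left h e t (by omega)]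
    exact he.1 (2 * j + 1) (by omega) (by omega)
  · rw [show (2 * (n - r)) / 2 = n - r by omega]
    refine Finset.sum_congr rfl fun u hu => ?_
    rw [show 2 * (r + u) + 1 = 2 * r + (2 * u + 1) by ring, walkPos_wapp_right h e t,
      he.2, zero_add]

lemma oddCnt_wapp_negExc {n r : ℕ} (hrn : r ≤ n) (h : 2 * r + 2 * (n - r) = 2 * n)
    {e : Fin (2 * r) → Bool} (he : e ∈ ExcN r) (t : Fin (2 * (n - r)) → Bool) :
    oddCnt (wapp h e t) = oddCnt t := by
  simp only [ExcN, Finset.mem_filter, Finset.mem_univ, true_and] at he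
  rw [oddCnt_eq_sum, oddCnt_eq_sum,
    show (2 * n) / 2 = r + (n - r) by omega, sum_range_add]
  rw [Finset.sum_congr rfl (g := fun _ => (0 : ℕ)) fun j hj => ?_, Finset.sum_const,
    smul_zero, zero_add]
  · rw [show (2 * (n - r)) / 2 = n - r by omega]
    refine Finset.sum_congr rfl fun u hu => ?_
    rw [show 2 * (r + u) + 1 = 2 * r + (2 * u + 1) by ring, walkPos_wapp_right h e t,
      he.2, zero_add]
  · rw [Finset.mem_range] at hj
    rw [if_neg]
    rw [walkPos_wapp_left h e t (by omega)]
    have := he.1 (2 * j + 1) (by omega) (by omega)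
    omega

/-! ### the main counting quantities -/

/-- number of walks of length `2n` with exactly `k` positive odd times. -/
def cnt (n k : ℕ) : ℕ :=
  ((Finset.univ : Finset (Fin (2 * n) → Bool)).filter (fun s => oddCnt s = k)).card

lemma cnt_zero_of_gt {n k : ℕ} (h : n < k) : cnt n k = 0 := by
  rw [cnt, Finset.card_eq_zero, Finset.filter_eq_empty_iff]
  intro s _
  have := oddCnt_le s
  rw [show (2 * n) / 2 = n by omega] at this
  omega

lemma cnt_zero_zero : cnt 0 0 = 1 := by
  rw [cnt]
  have : (Finset.univ : Finset (Fin (2 * 0) → Bool)).filter (fun s => oddCnt s = 0)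
      = Finset.univ := by
    rw [Finset.filter_eq_self]
    intro s _
    have := oddCnt_le s
    omega
  rw [this, Finset.card_univ, Fintype.card_fun]
  simp

/-- full position of the walk in terms of the number of `true` steps. -/
lemma walkPos_full {N : ℕ} (s : Fin N → Bool) :
    walkPos s N = 2 * ((Finset.univ.filter (fun i => s i)).card : ℤ) - N := by
  rw [walkPos_eq, ← Fin.sum_univ_eq_sum_range]
  have : ∀ i : Fin N, stepAt s i = 2 * (if s i then (1 : ℤ) else 0) - 1 := by
    intro i
    unfold stepAt
    rw [dif_pos i.isLt, Fin.eta]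
    by_cases h : s i <;> simp [h]
  rw [Finset.sum_congr rfl fun i _ => this i, Finset.sum_sub_distrib, ← Finset.mul_sum,
    Finset.sum_boole, Finset.sum_const, Finset.card_univ, Fintype.card_fin]
  simp

/-- bridges: walks of length `2m` ending at `0`. -/
def Br (m : ℕ) : Finset (Fin (2 * m) → Bool) :=
  Finset.univ.filter (fun s => walkPos s (2 * m) = 0)

lemma Br_card (m : ℕ) : (Br m).card = Nat.choose (2 * m) m := by
  have hiff : ∀ s : Fin (2 * m) → Bool,
      walkPos s (2 * m) = 0 ↔ (Finset.univ.filter (fun i => s i)).card = m := by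
    intro s
    rw [walkPos_full]
    constructor <;> intro h <;> omega
  rw [Br, show (2 * m).choose m
      = (Finset.powersetCard m (Finset.univ : Finset (Fin (2 * m)))).card by
    rw [Finset.card_powersetCard, Finset.card_univ, Fintype.card_fin]]
  refine Finset.card_nbij' (fun s => Finset.univ.filter (fun i => s i))
    (fun A => fun i => decide (i ∈ A)) ?_ ?_ ?_ ?_
  · intro s hs
    simp only [Finset.mem_coe, Finset.mem_filter, Finset.mem_univ, true_and] at hs
    rw [Finset.mem_coe, Finset.mem_powersetCard]
    exact ⟨Finset.subset_univ _, (hiff s).mp hs⟩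
  · intro A hA
    rw [Finset.mem_coe, Finset.mem_powersetCard] at hA
    simp only [Finset.mem_coe, Finset.mem_filter, Finset.mem_univ, true_and]
    rw [hiff]
    have : (Finset.univ.filter (fun i => decide (i ∈ A) = true)) = A := by
      ext i; simp
    rw [this, hA.2]
  · intro s _
    funext i
    simp
  · intro A _
    ext i
    simp

/-- the first-return identity for bridges. -/
lemma bridge_identity {m : ℕ} (hm : 1 ≤ m) :
    2 * ∑ r ∈ Finset.Icc 1 m, (ExcP r).card * Nat.choose (2 * (m - r)) (m - r)
      = Nat.choose (2 * m) m := by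
  have hBr : (Br m).card = Nat.choose (2 * m) m := Br_card m
  rw [Br, card_partition (fun s => walkPos s (2 * m) = 0)] at hBr
  have hempty : (Finset.univ.filter
      (fun s : Fin (2 * m) → Bool => walkPos s (2 * m) = 0 ∧ noZero s m)).card = 0 := by
    rw [Finset.card_eq_zero, Finset.filter_eq_empty_iff]
    rintro s _ ⟨hz, hnz⟩
    exact hnz m le_rfl hm hz
  rw [hempty, zero_add] at hBr
  rw [← hBr, Finset.mul_sum]
  refine Finset.sum_congr rfl fun r hr => ?_
  rw [Finset.mem_Icc] at hr
  have h : 2 * r + 2 * (m - r) = 2 * m := by omega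
  rw [card_fr_decomp hr.1 hr.2 h]
  have hinner : ∀ e ∈ Exc r,
      (Finset.univ.filter (fun t : Fin (2 * (m - r)) → Bool
        => walkPos (wapp h e t) (2 * m) = 0)).card = Nat.choose (2 * (m - r)) (m - r) := by
    intro e he
    simp only [Exc, Finset.mem_filter, Finset.mem_univ, true_and] at he
    have hpred : ∀ t : Fin (2 * (m - r)) → Bool,
        walkPos (wapp h e t) (2 * m) = 0 ↔ walkPos t (2 * (m - r)) = 0 := by
      intro t
      have hw := walkPos_wapp_right h e t (2 * (m - r))
      rw [show 2 * r + 2 * (m - r) = 2 * m from h] at hw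
      rw [hw, he.2, zero_add]
    rw [Finset.filter_congr (fun t _ => hpred t)]
    exact Br_card (m - r)
  rw [Finset.sum_congr rfl hinner, Finset.sum_const, smul_eq_mul, Exc_card hr.1]
  ring

/-! ### nonnegative walks and the doubling lemma -/

/-- nonnegative walks of length `L`. -/
def NN (L : ℕ) : Finset (Fin L → Bool) :=
  Finset.univ.filter (fun t => ∀ m, m ≤ L → 0 ≤ walkPos t m)

lemma oddCnt_eq_n_iff {n : ℕ} (s : Fin (2 * n) → Bool) :
    oddCnt s = n ↔ ∀ j, j < n → 0 < walkPos s (2 * j + 1) := by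
  unfold oddCnt
  rw [show (2 * n) / 2 = n by omega]
  constructor
  · intro hc j hj
    have hsub : (Finset.range n).filter (fun j => 0 < walkPos s (2 * j + 1))
        ⊆ Finset.range n := Finset.filter_subset _ _
    have heq := Finset.eq_of_subset_of_card_le hsub (by rw [hc, Finset.card_range])
    have : j ∈ (Finset.range n).filter (fun j => 0 < walkPos s (2 * j + 1)) := by
      rw [heq]; exact Finset.mem_range.mpr hj
    exact (Finset.mem_filter.mp this).2
  · intro hall
    rw [Finset.filter_true_of_mem (fun j hj => hall j (Finset.mem_range.mp hj)),
      Finset.card_range]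

lemma allOddPos_iff_nonneg {n : ℕ} (s : Fin (2 * n) → Bool) :
    (∀ j, j < n → 0 < walkPos s (2 * j + 1)) ↔ ∀ m, m ≤ 2 * n → 0 ≤ walkPos s m := by
  constructor
  · intro h m hm
    rcases Nat.even_or_odd m with ⟨c, hc⟩ | ⟨c, hc⟩
    · rcases Nat.eq_zero_or_pos c with rfl | hc0
      · rw [show m = 0 by omega, walkPos_zero]
      · have h1 := h (c - 1) (by omega)
        have h2 := walkPos_succ_ge s (2 * (c - 1) + 1)
        rw [show 2 * (c - 1) + 1 + 1 = m by omega] at h2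
        omega
    · have := h c (by omega)
      rw [show 2 * c + 1 = m by omega] at this
      omega
  · intro h j hj
    have h1 := h (2 * j + 1) (by omega)
    have h2 := walkPos_odd_ne_zero s (show 2 * j + 1 ≤ 2 * n by omega) (by omega)
    omega

/-- doubling: walks of length `2n` with all odd times positive are twice the
nonnegative walks of length `2n - 1`. -/
lemma cnt_n_n_eq {n : ℕ} (hn : 1 ≤ n) : cnt n n = 2 * (NN (2 * n - 1)).card := by
  have h : (2 * n - 1) + 1 = 2 * n := by omega
  rw [cnt, show 2 * (NN (2 * n - 1)).card
      = (NN (2 * n - 1) ×ˢ (Finset.univ : Finset (Fin 1 → Bool))).card by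
    rw [Finset.card_product, Finset.card_univ, Fintype.card_fun]
    simp [mul_comm]]
  refine Finset.card_nbij' (fun s => (spl1 (by omega) s, spl2 h s))
    (fun p => wapp h p.1 p.2) ?_ ?_ ?_ ?_
  · intro s hs
    simp only [Finset.mem_coe, Finset.mem_filter, Finset.mem_univ, true_and] at hs
    simp only [Finset.mem_coe, Finset.mem_product, Finset.mem_univ, and_true, NN, Finset.mem_filter, true_and]
    intro m hm
    rw [walkPos_spl1 (by omega) s hm]
    exact ((allOddPos_iff_nonneg s).mp ((oddCnt_eq_n_iff s).mp hs)) m (by omega)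
  · intro p hp
    simp only [Finset.mem_coe, Finset.mem_product, Finset.mem_univ, and_true, NN, Finset.mem_filter,
      true_and] at hp
    simp only [Finset.mem_coe, Finset.mem_filter, Finset.mem_univ, true_and]
    rw [oddCnt_eq_n_iff, allOddPos_iff_nonneg]
    intro m hm
    rcases Nat.lt_or_ge m (2 * n) with hm' | hm'
    · rw [walkPos_wapp_left h p.1 p.2 (by omega)]
      exact hp m (by omega)
    · have hmn : m = 2 * n := by omega
      have hlast : 0 ≤ walkPos (wapp h p.1 p.2) (2 * n - 1) := by
        rw [walkPos_wapp_left h p.1 p.2 (by omega)]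
        exact hp (2 * n - 1) le_rfl
      have hne : walkPos (wapp h p.1 p.2) (2 * n - 1) ≠ 0 :=
        walkPos_odd_ne_zero _ (by omega) (by omega)
      have hstep := walkPos_succ_ge (wapp h p.1 p.2) (2 * n - 1)
      rw [show 2 * n - 1 + 1 = 2 * n by omega] at hstep
      subst hmn
      omega
  · intro s _
    exact wapp_spl h (by omega) s
  · intro p _
    simp only [spl1_wapp, spl2_wapp]

/-- strictly positive walks of length `2n` are in bijection with nonnegative walks
of length `2n - 1`. -/
lemma g_eq {n : ℕ} (hn : 1 ≤ n) :
    ((Finset.univ : Finset (Fin (2 * n) → Bool)).filter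
      (fun s => ∀ m, m ≤ 2 * n → 0 < m → 0 < walkPos s m)).card = (NN (2 * n - 1)).card := by
  have h : 1 + (2 * n - 1) = 2 * n := by omega
  have hone : walkPos (fun _ : Fin 1 => true) 1 = 1 := by
    simp [walkPos_eq, stepAt]
  have hfirst : ∀ s : Fin (2 * n) → Bool, walkPos s 1 = stepAt s 0 := by
    intro s
    have := walkPos_succ s 0
    rwa [Nat.zero_add, walkPos_zero, zero_add] at this
  refine Finset.card_nbij' (fun s => spl2 h s) (fun t => wapp h (fun _ => true) t) ?_ ?_ ?_ ?_
  · intro s hs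
    simp only [Finset.mem_coe, Finset.mem_filter, Finset.mem_univ, true_and] at hs
    simp only [Finset.mem_coe, NN, Finset.mem_filter, Finset.mem_univ, true_and]
    intro m hm
    have hs1 : walkPos s 1 = 1 := by
      have hpos := hs 1 (by omega) (by omega)
      have := hfirst s
      rcases stepAt_ne_zero s (show 0 < 2 * n by omega) with h' | h' <;> omega
    have := walkPos_spl2 h s m
    have hsm := hs (1 + m) (by omega) (by omega)
    omega
  · intro t ht
    simp only [Finset.mem_coe, NN, Finset.mem_filter, Finset.mem_univ, true_and] at ht
    simp only [Finset.mem_coe, Finset.mem_filter, Finset.mem_univ, true_and]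
    intro m hm h0
    have hu : m = 1 + (m - 1) := by omega
    rw [hu, walkPos_wapp_right h _ t, hone]
    have := ht (m - 1) (by omega)
    omega
  · intro s hs
    simp only [Finset.mem_coe, Finset.mem_filter, Finset.mem_univ, true_and] at hs
    have hs1 : walkPos s 1 = 1 := by
      have hpos := hs 1 (by omega) (by omega)
      have := hfirst s
      rcases stepAt_ne_zero s (show 0 < 2 * n by omega) with h' | h' <;> omega
    have hspl1 : spl1 (show 1 ≤ 2 * n by omega) s = (fun _ : Fin 1 => true) := by
      funext i
      have hi0 : (i : ℕ) = 0 := by omega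
      have hst : stepAt s 0 = 1 := by rw [← hfirst s]; exact hs1
      unfold spl1
      unfold stepAt at hst
      rw [dif_pos (show 0 < 2 * n by omega)] at hst
      by_cases hb : s ⟨0, by omega⟩ = true
      · have : (⟨(i : ℕ), by omega⟩ : Fin (2 * n)) = ⟨0, by omega⟩ := by
          ext; simp [hi0]
        rw [this]; exact hb
      · rw [if_neg hb] at hst; omega
    conv_rhs => rw [← wapp_spl h (by omega) s]
    rw [hspl1]
  · intro t _
    exact spl2_wapp h (fun _ => true) t

/-! ### classification of walks with no return to zero -/

lemma noZero_pos_oddCnt {n : ℕ} (hn : 1 ≤ n) (s : Fin (2 * n) → Bool)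
    (hnz : noZero s n) (h1 : 0 < walkPos s 1) : oddCnt s = n := by
  have hne : ∀ m, 0 < m → m ≤ 2 * n → walkPos s m ≠ 0 := by
    intro m h0 hm
    rcases Nat.even_or_odd m with ⟨c, hc⟩ | ⟨c, hc⟩
    · exact hnz c (by omega) (by omega) ∘ (by rw [show 2 * c = m by omega]; exact ·)
    · exact walkPos_odd_ne_zero s hm (by omega)
  have hpos := sign_prop s (a := 0) (b := 2 * n)
    (fun m h0 hm => hne m h0 hm)
    (by rw [show (0 : ℕ) + 1 = 1 from rfl]; exact h1)
  rw [oddCnt_eq_n_iff]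
  intro j hj
  exact hpos (2 * j + 1) (by omega) (by omega)

lemma noZero_wneg {n : ℕ} (s : Fin (2 * n) → Bool) (hnz : noZero s n) :
    noZero (wneg s) n := by
  intro r hr h0
  rw [walkPos_wneg]
  have := hnz r hr h0
  omega

lemma noZero_cases {n : ℕ} (s : Fin (2 * n) → Bool) (hnz : noZero s n) :
    oddCnt s = 0 ∨ oddCnt s = n := by
  rcases Nat.eq_zero_or_pos n with rfl | hn
  · left
    have := oddCnt_le s
    omega
  have h1 : walkPos s 1 ≠ 0 := walkPos_odd_ne_zero s (by omega) (by omega)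
  rcases lt_or_gt_of_ne h1 with hneg | hpos
  · left
    have : oddCnt (wneg s) = n := by
      refine noZero_pos_oddCnt hn (wneg s) (noZero_wneg s hnz) ?_
      rw [walkPos_wneg]; omega
    rw [oddCnt_wneg] at this
    have hle := oddCnt_le s
    rw [show (2 * n) / 2 = n by omega] at hle
    omega
  · right
    exact noZero_pos_oddCnt hn s hnz hpos

lemma oddCnt_noZero_iff {n : ℕ} (hn : 1 ≤ n) (s : Fin (2 * n) → Bool) :
    (oddCnt s = n ∧ noZero s n) ↔ ∀ m, m ≤ 2 * n → 0 < m → 0 < walkPos s m := by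
  constructor
  · rintro ⟨hc, hnz⟩
    have hodd := (oddCnt_eq_n_iff s).mp hc
    intro m hm h0
    rcases Nat.even_or_odd m with ⟨c, hc'⟩ | ⟨c, hc'⟩
    · have hne := hnz c (by omega) (by omega)
      have hprev := hodd (c - 1) (by omega)
      have hstep := walkPos_succ_ge s (2 * (c - 1) + 1)
      rw [show 2 * (c - 1) + 1 + 1 = 2 * c by omega] at hstep
      rw [show m = 2 * c by omega]
      omega
    · have := hodd c (by omega)
      rw [show 2 * c + 1 = m by omega] at this
      exact this
  · intro hall
    constructor
    · rw [oddCnt_eq_n_iff]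
      intro j hj
      exact hall (2 * j + 1) (by omega) (by omega)
    · intro r hr h0
      have := hall (2 * r) (by omega) (by omega)
      omega

/-- symmetry of the count. -/
lemma cnt_symm (n : ℕ) : cnt n 0 = cnt n n := by
  rw [cnt, card_filter_wneg (fun s : Fin (2 * n) → Bool => oddCnt s = 0), cnt]
  congr 1
  refine Finset.filter_congr fun s _ => ?_
  rw [oddCnt_wneg]
  have hle := oddCnt_le s
  rw [show (2 * n) / 2 = n by omega] at hle
  constructor <;> intro h' <;> omega

/-- the main decomposition of `cnt` at the first return to zero. -/
lemma cnt_decomp {n : ℕ} (k : ℕ) (hn : 1 ≤ n) :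
    cnt n k = ((Finset.univ : Finset (Fin (2 * n) → Bool)).filter
        (fun s => oddCnt s = k ∧ noZero s n)).card
      + ∑ r ∈ Finset.Icc 1 n, (ExcP r).card *
          ((if r ≤ k then cnt (n - r) (k - r) else 0) + cnt (n - r) k) := by
  rw [cnt, card_partition (fun s => oddCnt s = k)]
  congr 1
  refine Finset.sum_congr rfl fun r hr => ?_
  rw [Finset.mem_Icc] at hr
  have h : 2 * r + 2 * (n - r) = 2 * n := by omega
  rw [card_fr_decomp hr.1 hr.2 h]
  rw [Exc_eq_union hr.1, Finset.sum_union (Exc_disjoint hr.1)]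
  have h1 : ∀ e ∈ ExcP r,
      (Finset.univ.filter (fun t : Fin (2 * (n - r)) → Bool => oddCnt (wapp h e t) = k)).card
        = (if r ≤ k then cnt (n - r) (k - r) else 0) := by
    intro e he
    have hpred : ∀ t : Fin (2 * (n - r)) → Bool,
        oddCnt (wapp h e t) = k ↔ r + oddCnt t = k := by
      intro t
      rw [oddCnt_wapp_posExc hr.2 h he t]
    rw [Finset.filter_congr (fun t _ => hpred t)]
    by_cases hrk : r ≤ k
    · rw [if_pos hrk, cnt]
      congr 1
      refine Finset.filter_congr fun t _ => ?_
      constructor <;> intro h' <;> omega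
    · rw [if_neg hrk, Finset.card_eq_zero, Finset.filter_eq_empty_iff]
      intro t _
      omega
  have h2 : ∀ e ∈ ExcN r,
      (Finset.univ.filter (fun t : Fin (2 * (n - r)) → Bool => oddCnt (wapp h e t) = k)).card
        = cnt (n - r) k := by
    intro e he
    have hpred : ∀ t : Fin (2 * (n - r)) → Bool,
        oddCnt (wapp h e t) = k ↔ oddCnt t = k := by
      intro t
      rw [oddCnt_wapp_negExc hr.2 h he t]
    rw [Finset.filter_congr (fun t _ => hpred t), cnt]
  rw [Finset.sum_congr rfl h1, Finset.sum_congr rfl h2, Finset.sum_const, Finset.sum_const,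
    smul_eq_mul, smul_eq_mul, ExcN_card, mul_add]

/-! ### the discrete arcsine law -/

theorem cnt_eq (n : ℕ) : ∀ k, k ≤ n →
    cnt n k = Nat.choose (2 * k) k * Nat.choose (2 * (n - k)) (n - k) := by
  induction n using Nat.strong_induction_on with
  | _ n IH =>
  intro k hk
  rcases Nat.eq_zero_or_pos n with rfl | hn
  · have hk0 : k = 0 := by omega
    subst hk0
    simp [cnt_zero_zero]
  have hnn : cnt n n = Nat.choose (2 * n) n := by
    have hdec := cnt_decomp n hn
    have hgeq : ((Finset.univ : Finset (Fin (2 * n) → Bool)).filter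
        (fun s => oddCnt s = n ∧ noZero s n)).card = (NN (2 * n - 1)).card := by
      rw [Finset.filter_congr (fun s _ => oddCnt_noZero_iff hn s)]
      exact g_eq hn
    have hsum : ∀ r ∈ Finset.Icc 1 n, (ExcP r).card *
        ((if r ≤ n then cnt (n - r) (n - r) else 0) + cnt (n - r) n)
        = (ExcP r).card * Nat.choose (2 * (n - r)) (n - r) := by
      intro r hr
      rw [Finset.mem_Icc] at hr
      rw [if_pos hr.2, IH (n - r) (by omega) (n - r) le_rfl,
        cnt_zero_of_gt (show n - r < n by omega), add_zero]
      simp [Nat.sub_self]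
    rw [Finset.sum_congr rfl hsum, hgeq] at hdec
    have hdouble := cnt_n_n_eq hn
    have hbr := bridge_identity hn
    omega
  by_cases hkn : k = n
  · subst hkn
    rw [hnn, Nat.sub_self]
    simp
  rcases Nat.eq_zero_or_pos k with rfl | hkpos
  · rw [cnt_symm, hnn]
    simp [Nat.mul_comm]
  have hkn' : k < n := by omega
  have hdec := cnt_decomp k hn
  have hzero : ((Finset.univ : Finset (Fin (2 * n) → Bool)).filter
      (fun s => oddCnt s = k ∧ noZero s n)).card = 0 := by
    rw [Finset.card_eq_zero, Finset.filter_eq_empty_iff]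
    rintro s _ ⟨hc, hnz⟩
    rcases noZero_cases s hnz with h | h <;> omega
  rw [hzero, zero_add] at hdec
  have hsum : ∀ r ∈ Finset.Icc 1 n, (ExcP r).card *
      ((if r ≤ k then cnt (n - r) (k - r) else 0) + cnt (n - r) k)
      = (ExcP r).card * (if r ≤ k then Nat.choose (2 * (k - r)) (k - r) else 0)
          * Nat.choose (2 * (n - k)) (n - k)
        + (ExcP r).card *
            (if r ≤ n - k then Nat.choose (2 * ((n - k) - r)) ((n - k) - r) else 0)
          * Nat.choose (2 * k) k := by
    intro r hr
    rw [Finset.mem_Icc] at hr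
    rw [mul_add]
    congr 1
    · by_cases hrk : r ≤ k
      · rw [if_pos hrk, if_pos hrk, IH (n - r) (by omega) (k - r) (by omega),
          show (n - r) - (k - r) = n - k by omega]
        ring
      · rw [if_neg hrk, if_neg hrk]
        ring
    · by_cases hrk : r ≤ n - k
      · rw [if_pos hrk, IH (n - r) (by omega) k (by omega),
          show (n - r) - k = (n - k) - r by omega]
        ring
      · rw [if_neg hrk, cnt_zero_of_gt (by omega)]
        ring
  rw [Finset.sum_congr rfl hsum, Finset.sum_add_distrib, ← Finset.sum_mul,
    ← Finset.sum_mul] at hdec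
  have hS1 : ∑ r ∈ Finset.Icc 1 n,
      (ExcP r).card * (if r ≤ k then Nat.choose (2 * (k - r)) (k - r) else 0)
      = ∑ r ∈ Finset.Icc 1 k, (ExcP r).card * Nat.choose (2 * (k - r)) (k - r) := by
    have hsub : Finset.Icc 1 k ⊆ Finset.Icc 1 n := Finset.Icc_subset_Icc_right (by omega)
    have hvan : ∀ r ∈ Finset.Icc 1 n, r ∉ Finset.Icc 1 k →
        (ExcP r).card * (if r ≤ k then Nat.choose (2 * (k - r)) (k - r) else 0) = 0 := by
      intro r hr hnr
      rw [Finset.mem_Icc] at hr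
      rw [if_neg fun hc => hnr (Finset.mem_Icc.mpr ⟨hr.1, hc⟩), mul_zero]
    rw [← Finset.sum_subset hsub hvan]
    refine Finset.sum_congr rfl fun r hr => ?_
    rw [Finset.mem_Icc] at hr
    rw [if_pos hr.2]
  have hS2 : ∑ r ∈ Finset.Icc 1 n,
      (ExcP r).card * (if r ≤ n - k then Nat.choose (2 * ((n - k) - r)) ((n - k) - r) else 0)
      = ∑ r ∈ Finset.Icc 1 (n - k),
          (ExcP r).card * Nat.choose (2 * ((n - k) - r)) ((n - k) - r) := by
    have hsub : Finset.Icc 1 (n - k) ⊆ Finset.Icc 1 n :=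
      Finset.Icc_subset_Icc_right (by omega)
    have hvan : ∀ r ∈ Finset.Icc 1 n, r ∉ Finset.Icc 1 (n - k) →
        (ExcP r).card *
          (if r ≤ n - k then Nat.choose (2 * ((n - k) - r)) ((n - k) - r) else 0) = 0 := by
      intro r hr hnr
      rw [Finset.mem_Icc] at hr
      rw [if_neg fun hc => hnr (Finset.mem_Icc.mpr ⟨hr.1, hc⟩), mul_zero]
    rw [← Finset.sum_subset hsub hvan]
    refine Finset.sum_congr rfl fun r hr => ?_
    rw [Finset.mem_Icc] at hr
    rw [if_pos hr.2]
  rw [hS1, hS2] at hdec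
  have hbr1 := bridge_identity (m := k) hkpos
  have hbr2 := bridge_identity (m := n - k) (by omega)
  have hfinal : 2 * cnt n k
      = 2 * (Nat.choose (2 * k) k * Nat.choose (2 * (n - k)) (n - k)) := by
    calc 2 * cnt n k
        = (2 * ∑ r ∈ Finset.Icc 1 k, (ExcP r).card * Nat.choose (2 * (k - r)) (k - r))
            * Nat.choose (2 * (n - k)) (n - k)
          + (2 * ∑ r ∈ Finset.Icc 1 (n - k),
              (ExcP r).card * Nat.choose (2 * ((n - k) - r)) ((n - k) - r))
            * Nat.choose (2 * k) k := by rw [hdec]; ring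
      _ = Nat.choose (2 * k) k * Nat.choose (2 * (n - k)) (n - k)
          + Nat.choose (2 * (n - k)) (n - k) * Nat.choose (2 * k) k := by rw [hbr1, hbr2]
      _ = 2 * (Nat.choose (2 * k) k * Nat.choose (2 * (n - k)) (n - k)) := by ring
  exact Nat.eq_of_mul_eq_mul_left (by norm_num) hfinal

end RW

/-- The probability that the simple symmetric random walk spends exactly `2k` of the first
`2n` time units on the positive side equals `(1/2)^{2n} C(2k,k) C(2(n-k),n-k)`. -/
theorem stmt0 (n k : ℕ) (hn : 1 ≤ n) (hk : k ≤ n) :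
    (((Finset.univ : Finset (Fin (2 * n) → Bool)).filter
        (fun s => sojournTime s = 2 * k)).card : ℝ) / 2 ^ (2 * n)
      = (1 / 2 : ℝ) ^ (2 * n) * Nat.choose (2 * k) k * Nat.choose (2 * (n - k)) (n - k) := by
  have hfilter : ((Finset.univ : Finset (Fin (2 * n) → Bool)).filter
      (fun s => sojournTime s = 2 * k)).card = RW.cnt n k := by
    rw [RW.cnt]
    congr 1
    refine Finset.filter_congr fun s _ => ?_
    rw [RW.sojourn_eq_two_mul_oddCnt s]
    constructor <;> intro h <;> omega
  rw [hfilter, RW.cnt_eq n k hk]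
  rw [div_pow, one_pow]
  push_cast
  field_simp
end

section
/- For the simple symmetric random walk conditioned to start at the origin and return to the origin at time 2n, the probability that the walker spends exactly 2k time units on the positive side equals 1/(n+1), independently of k ∈ {0, 1, ..., n} (the equidistribution theorem). -/
namespace CF

lemma walkPos_zero {N} (s : Fin N → Bool) : walkPos s 0 = 0 := by simp [walkPos]

lemma walkPos_succ {N} (s : Fin N → Bool) (m : ℕ) (h : m < N) :
    walkPos s (m+1) = walkPos s m + (if s ⟨m, h⟩ then 1 else -1) := by
  simp [walkPos, Finset.sum_range_succ, h]

lemma walkPos_succ' {N} (s : Fin N → Bool) (m : ℕ) (h : m < N) :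
    walkPos s (m+1) = walkPos s m + 1 ∨ walkPos s (m+1) = walkPos s m - 1 := by
  rw [walkPos_succ s m h]
  by_cases hs : s ⟨m, h⟩
  · left; simp [hs]
  · right; simp [hs]; ring

lemma walkPos_parity {N} (s : Fin N → Bool) : ∀ m, m ≤ N → Even (walkPos s m + m) := by
  intro m
  induction m with
  | zero => intro _; simp [walkPos_zero]
  | succ m ih =>
    intro hm
    obtain ⟨c, hc⟩ := ih (by omega)
    rcases walkPos_succ' s m (by omega) with h | h
    · exact ⟨c + 1, by push_cast; push_cast at hc; omega⟩
    · exact ⟨c, by push_cast; push_cast at hc; omega⟩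

lemma walkPos_sum_ne {N} (s : Fin N → Bool) (m : ℕ) (hm : m + 1 ≤ N) :
    walkPos s m + walkPos s (m+1) ≠ 0 := by
  obtain ⟨c, hc⟩ := walkPos_parity s m (by omega)
  obtain ⟨d, hd⟩ := walkPos_parity s (m+1) hm
  push_cast at hc hd
  omega

lemma cond_iff {N} (s : Fin N → Bool) (m : ℕ) (hm : m + 1 ≤ N) :
    (0 < walkPos s m ∨ 0 < walkPos s (m+1)) ↔ 0 < walkPos s m + walkPos s (m+1) := by
  rcases walkPos_succ' s m (by omega) with h | h <;> omega

lemma walkPos_slice {N M : ℕ} (s : Fin N → Bool) (u : Fin M → Bool) (a : ℕ)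
    (hM : a + M ≤ N) (hu : ∀ i : Fin M, u i = s ⟨a + i.1, by omega⟩) :
    ∀ j, j ≤ M → walkPos u j = walkPos s (a + j) - walkPos s a := by
  intro j
  induction j with
  | zero => intro _; simp [walkPos_zero]
  | succ j ih =>
    intro hj
    have h1 : j < M := by omega
    have h2 : a + j < N := by omega
    rw [walkPos_succ u j h1, show a + (j+1) = (a+j)+1 from rfl, walkPos_succ s (a+j) h2,
      ih (by omega), hu ⟨j, h1⟩]
    ring

lemma walkPos_neg {N} (s : Fin N → Bool) (m : ℕ) :
    walkPos (fun i => !(s i)) m = - walkPos s m := by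
  rw [walkPos, walkPos, ← Finset.sum_neg_distrib]
  refine Finset.sum_congr rfl fun i _ => ?_
  by_cases h : i < N
  · by_cases hs : s ⟨i, h⟩ <;> simp [h, hs]
  · simp [h]


lemma soj_split {N M a : ℕ} (s : Fin N → Bool) (v : Fin M → Bool)
    (haM : a + M = N)
    (hv : ∀ i : Fin M, v i = s ⟨a + i.1, by omega⟩)
    (ha : walkPos s a = 0)
    (hfirst : ∀ m < a, (0 < walkPos s m ∨ 0 < walkPos s (m+1))) :
    sojournTime s = a + sojournTime v := by
  have hslice := walkPos_slice s v a (by omega) hv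
  rw [sojournTime, sojournTime, Finset.card_filter, Finset.card_filter,
    Finset.range_eq_Ico, ← Finset.sum_Ico_consecutive _ (Nat.zero_le a) (show a ≤ N by omega)]
  congr 1
  · rw [← Finset.range_eq_Ico]
    rw [Finset.sum_congr rfl (fun m hm => if_pos (hfirst m (Finset.mem_range.mp hm)))]
    simp
  · rw [Finset.sum_Ico_eq_sum_range, show N - a = M by omega]
    refine Finset.sum_congr rfl fun j hj => ?_
    have hj' : j < M := Finset.mem_range.mp hj
    have e1 : walkPos s (a + j) = walkPos v j := by rw [hslice j (by omega), ha]; ring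
    have e2 : walkPos s (a + j + 1) = walkPos v (j+1) := by
      rw [show a + j + 1 = a + (j+1) from rfl, hslice (j+1) (by omega), ha]; ring
    rw [e1, e2]

lemma soj_le {N : ℕ} (s : Fin N → Bool) : sojournTime s ≤ N := by
  calc sojournTime s ≤ (Finset.range N).card := Finset.card_filter_le _ _
  _ = N := Finset.card_range N

lemma soj_full {M : ℕ} (u : Fin M → Bool) (hbr : walkPos u M = 0) :
    sojournTime u = M ↔ ∀ j ≤ M, 0 ≤ walkPos u j := by
  constructor
  · intro hs
    by_contra hc
    push_neg at hc
    obtain ⟨j, hj, hneg⟩ := hc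
    have hjM : j < M := by
      rcases Nat.lt_or_ge j M with h | h
      · exact h
      · exfalso; have : j = M := by omega
        rw [this, hbr] at hneg; omega
    have hcond : ¬ (0 < walkPos u j ∨ 0 < walkPos u (j+1)) := by
      rcases walkPos_succ' u j hjM with h | h <;> omega
    have hss : (Finset.range M).filter
        (fun m => 0 < walkPos u m ∨ 0 < walkPos u (m + 1)) ⊂ Finset.range M := by
      refine ⟨Finset.filter_subset _ _, fun hsub => ?_⟩
      have := Finset.mem_filter.mp (hsub (Finset.mem_range.mpr hjM))
      exact hcond this.2
    have h5 := Finset.card_lt_card hss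
    rw [Finset.card_range] at h5
    rw [sojournTime] at hs
    omega
  · intro hpos
    rw [sojournTime, Finset.filter_true_of_mem, Finset.card_range]
    intro m hm
    have hmM : m < M := Finset.mem_range.mp hm
    have h1 := hpos m (by omega)
    have h2 := hpos (m+1) (by omega)
    have h3 := walkPos_sum_ne u m (by omega)
    omega

lemma soj_neg {N : ℕ} (s : Fin N → Bool) :
    sojournTime (fun i => !(s i)) = N - sojournTime s := by
  have key : ∀ m ∈ Finset.range N,
      ((0 < walkPos (fun i => !(s i)) m ∨ 0 < walkPos (fun i => !(s i)) (m+1)) ↔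
        ¬ (0 < walkPos s m ∨ 0 < walkPos s (m+1))) := by
    intro m hm
    have hmN : m + 1 ≤ N := Finset.mem_range.mp hm
    have h1 := cond_iff s m hmN
    have h2 := cond_iff (fun i => !(s i)) m hmN
    have h3 := walkPos_sum_ne s m hmN
    rw [h2, h1, walkPos_neg, walkPos_neg]
    omega
  rw [sojournTime, Finset.filter_congr key]
  have := Finset.card_filter_add_card_filter_not
    (s := Finset.range N) (p := fun m => 0 < walkPos s m ∨ 0 < walkPos s (m+1))
  rw [Finset.card_range] at this
  rw [sojournTime]
  omega

/-- first return time to 0 -/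
noncomputable def fr {N : ℕ} (s : Fin N → Bool) : ℕ := sInf {t | 0 < t ∧ walkPos s t = 0}

def Bcnt (n k : ℕ) : ℕ := ((Finset.univ : Finset (Fin (2*n) → Bool)).filter
    (fun s => walkPos s (2*n) = 0 ∧ sojournTime s = 2*k)).card

def fwd (n r : ℕ) (hr1 : 1 ≤ r) (hrn : r ≤ n+1) (s : Fin (2*(n+1)) → Bool) :
    (Fin (2*(r-1)) → Bool) × (Fin (2*(n+1-r)) → Bool) :=
  (fun i => s ⟨1 + i.1, by omega⟩, fun i => s ⟨2*r + i.1, by omega⟩)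

def bwd (n r : ℕ) (hr1 : 1 ≤ r) (hrn : r ≤ n+1)
    (p : (Fin (2*(r-1)) → Bool) × (Fin (2*(n+1-r)) → Bool)) : Fin (2*(n+1)) → Bool :=
  fun i =>
    if h1 : i.1 = 0 then true
    else if h2 : i.1 < 2*r - 1 then p.1 ⟨i.1 - 1, by omega⟩
    else if h3 : i.1 = 2*r - 1 then false
    else p.2 ⟨i.1 - 2*r, by have := i.2; omega⟩


lemma apply_mk_eq {M : ℕ} (f : Fin M → Bool) (i : Fin M) (b : ℕ) (hb : b < M)
    (h : b = i.1) : f i = f ⟨b, hb⟩ := by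
  cases i with
  | mk iv hiv => subst h; rfl

lemma mk_apply_eq {M : ℕ} (f : Fin M → Bool) (i : Fin M) (b : ℕ) (hb : b < M)
    (h : b = i.1) : f ⟨b, hb⟩ = f i := (apply_mk_eq f i b hb h).symm

section Fiber
variable {n r : ℕ}

lemma bwd_zero (hr1 : 1 ≤ r) (hrn : r ≤ n+1) (p) (i : Fin (2*(n+1))) (h : i.1 = 0) :
    bwd n r hr1 hrn p i = true := by
  rw [bwd, dif_pos h]

lemma bwd_mid (hr1 : 1 ≤ r) (hrn : r ≤ n+1) (p) (i : Fin (2*(n+1)))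
    (h : 1 ≤ i.1) (h' : i.1 < 2*r - 1) :
    bwd n r hr1 hrn p i = p.1 ⟨i.1 - 1, by omega⟩ := by
  rw [bwd, dif_neg (by omega), dif_pos h']

lemma bwd_ret (hr1 : 1 ≤ r) (hrn : r ≤ n+1) (p) (i : Fin (2*(n+1))) (h : i.1 = 2*r - 1) :
    bwd n r hr1 hrn p i = false := by
  rw [bwd, dif_neg (by omega), dif_neg (by omega), dif_pos h]

lemma bwd_tail (hr1 : 1 ≤ r) (hrn : r ≤ n+1) (p) (i : Fin (2*(n+1))) (h : 2*r ≤ i.1) :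
    bwd n r hr1 hrn p i = p.2 ⟨i.1 - 2*r, by omega⟩ := by
  rw [bwd, dif_neg (by omega), dif_neg (by omega), dif_neg (by omega)]

lemma walkPos_one {N : ℕ} (s : Fin N → Bool) (hN : 0 < N) (hs0 : s ⟨0, hN⟩ = true) :
    walkPos s 1 = 1 := by
  have h := walkPos_succ s 0 hN
  rw [walkPos_zero, hs0] at h
  simpa using h

/-- facts about s in the positive fiber -/
lemma pos_fiber_facts (hr1 : 1 ≤ r) (hrn : r ≤ n+1) (s : Fin (2*(n+1)) → Bool)
    (hs0 : s ⟨0, by omega⟩ = true)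
    (h2r0 : walkPos s (2*r) = 0)
    (hmin : ∀ t, 0 < t → t < 2*r → walkPos s t ≠ 0) :
    (∀ t, 1 ≤ t → t ≤ 2*r - 1 → 1 ≤ walkPos s t) ∧
    walkPos s (2*r - 1) = 1 ∧ s ⟨2*r - 1, by omega⟩ = false := by
  have pos1 : walkPos s 1 = 1 := walkPos_one s (by omega) hs0
  have hpos : ∀ t, 1 ≤ t → t ≤ 2*r - 1 → 1 ≤ walkPos s t := by
    intro t
    induction t with
    | zero => omega
    | succ t ih =>
      intro _ h2
      rcases Nat.eq_or_lt_of_le (show 1 ≤ t + 1 by omega) with h | h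
      · rw [← h, pos1]
      · have ht1 : 1 ≤ t := by omega
        have ihv := ih ht1 (by omega)
        have hne := hmin (t+1) (by omega) (by omega)
        rcases walkPos_succ' s t (by omega) with h | h <;> omega
  have p2 : walkPos s (2*r - 1) = 1 := by
    have h1 := hpos (2*r-1) (by omega) (by omega)
    have h2 := walkPos_succ' s (2*r-1) (by omega)
    rw [show 2*r - 1 + 1 = 2*r by omega, h2r0] at h2
    omega
  refine ⟨hpos, p2, ?_⟩
  have h3 := walkPos_succ s (2*r-1) (by omega)
  rw [show 2*r - 1 + 1 = 2*r by omega, h2r0, p2] at h3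
  by_contra hc
  rw [Bool.not_eq_false] at hc
  rw [hc] at h3
  simp at h3

lemma fr_eq_iff {N : ℕ} (s : Fin N → Bool) (t0 : ℕ) (ht0 : 0 < t0)
    (h0 : walkPos s t0 = 0) (hmin : ∀ t, 0 < t → t < t0 → walkPos s t ≠ 0) :
    fr s = t0 := by
  have hd : fr s = sInf {t | 0 < t ∧ walkPos s t = 0} := rfl
  refine le_antisymm (hd ▸ Nat.sInf_le ⟨ht0, h0⟩) ?_
  by_contra hc
  push_neg at hc
  have hne : ({t | 0 < t ∧ walkPos s t = 0} : Set ℕ).Nonempty := ⟨t0, ht0, h0⟩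
  have hmem : 0 < fr s ∧ walkPos s (fr s) = 0 := Nat.sInf_mem hne
  exact hmin _ hmem.1 (by omega) hmem.2

lemma fr_spec {N : ℕ} (s : Fin N → Bool) (hN : 0 < N) (hbr : walkPos s N = 0) :
    (0 < fr s ∧ walkPos s (fr s) = 0) ∧ (∀ t, 0 < t → t < fr s → walkPos s t ≠ 0)
      ∧ fr s ≤ N := by
  have hd : fr s = sInf {t | 0 < t ∧ walkPos s t = 0} := rfl
  have hne : ({t | 0 < t ∧ walkPos s t = 0} : Set ℕ).Nonempty := ⟨N, hN, hbr⟩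
  have hmem : 0 < fr s ∧ walkPos s (fr s) = 0 := Nat.sInf_mem hne
  refine ⟨hmem, fun t h1 h2 h3 => ?_, hd ▸ Nat.sInf_le ⟨hN, hbr⟩⟩
  have hle : fr s ≤ t := hd ▸ Nat.sInf_le ⟨h1, h3⟩
  omega

lemma fiber_pos_card (hr1 : 1 ≤ r) (hrn : r ≤ n+1) (k : ℕ) (hrk : r ≤ k) (hk : k ≤ n+1) :
    ((Finset.univ : Finset (Fin (2*(n+1)) → Bool)).filter
      (fun s => (walkPos s (2*(n+1)) = 0 ∧ sojournTime s = 2*k) ∧ fr s = 2*r ∧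
        s ⟨0, by omega⟩ = true)).card
    = Bcnt (r-1) (r-1) * Bcnt (n+1-r) (k-r) := by
  rw [Bcnt, Bcnt, ← Finset.card_product, ← Finset.filter_product]
  refine Finset.card_nbij' (fwd n r hr1 hrn) (bwd n r hr1 hrn) ?_ ?_ ?_ ?_
  · -- forward membership
    intro s hs
    rw [Finset.mem_coe, Finset.mem_filter] at hs
    obtain ⟨-, ⟨hbr, hsoj⟩, hfr, hs0⟩ := hs
    obtain ⟨⟨-, h2r0⟩, hmin, -⟩ := fr_spec s (by omega) hbr
    rw [hfr] at h2r0 hmin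
    obtain ⟨hpos, p2, -⟩ := pos_fiber_facts hr1 hrn s hs0 h2r0 hmin
    have pos1 : walkPos s 1 = 1 := walkPos_one s (by omega) hs0
    have hsliceu := walkPos_slice s (fwd n r hr1 hrn s).1 1 (by omega) (fun i => rfl)
    have hslicev := walkPos_slice s (fwd n r hr1 hrn s).2 (2*r) (by omega) (fun i => rfl)
    have hubr : walkPos (fwd n r hr1 hrn s).1 (2*(r-1)) = 0 := by
      rw [hsliceu (2*(r-1)) le_rfl, show 1 + 2*(r-1) = 2*r - 1 by omega, p2, pos1]; ring
    have hvbr : walkPos (fwd n r hr1 hrn s).2 (2*(n+1-r)) = 0 := by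
      rw [hslicev (2*(n+1-r)) le_rfl, show 2*r + 2*(n+1-r) = 2*(n+1) by omega, hbr, h2r0]; ring
    have hfirst : ∀ m < 2*r, (0 < walkPos s m ∨ 0 < walkPos s (m+1)) := by
      intro m hm
      rcases Nat.eq_zero_or_pos m with h | h
      · right; rw [h, pos1]; omega
      · left; have := hpos m (by omega) (by omega); omega
    have hsplit := soj_split s (fwd n r hr1 hrn s).2 (show 2*r + 2*(n+1-r) = 2*(n+1) by omega)
      (fun i => rfl) h2r0 hfirst
    rw [Finset.mem_coe, Finset.mem_filter, Finset.mem_product]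
    refine ⟨⟨Finset.mem_univ _, Finset.mem_univ _⟩, ⟨hubr, ?_⟩, hvbr, ?_⟩
    · rw [soj_full _ hubr]
      intro j hj
      rw [hsliceu j (by omega), pos1]
      have := hpos (1+j) (by omega) (by omega)
      omega
    · rw [hsoj] at hsplit; omega
  · -- backward membership
    intro p hp
    rw [Finset.mem_coe, Finset.mem_filter, Finset.mem_product] at hp
    obtain ⟨-, ⟨hubr, husoj⟩, hvbr, hvsoj⟩ := hp
    set s := bwd n r hr1 hrn p with hsdef
    have hs0 : s ⟨0, by omega⟩ = true := bwd_zero hr1 hrn p _ rfl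
    have pos1 : walkPos s 1 = 1 := walkPos_one s (by omega) hs0
    have hu : ∀ i : Fin (2*(r-1)), p.1 i = s ⟨1 + i.1, by omega⟩ := by
      intro i
      have h := bwd_mid hr1 hrn p ⟨1 + i.1, by omega⟩
        (show 1 ≤ 1 + i.1 by omega) (show 1 + i.1 < 2*r - 1 by omega)
      rw [hsdef, h]
      exact apply_mk_eq p.1 i _ _ (by simp only [Fin.val_mk]; omega)
    have hv : ∀ i : Fin (2*(n+1-r)), p.2 i = s ⟨2*r + i.1, by omega⟩ := by
      intro i
      have h := bwd_tail hr1 hrn p ⟨2*r + i.1, by omega⟩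
        (show 2*r ≤ 2*r + i.1 by omega)
      rw [hsdef, h]
      exact apply_mk_eq p.2 i _ _ (by simp only [Fin.val_mk]; omega)
    have hsliceu := walkPos_slice s p.1 1 (by omega) hu
    have hunn := (soj_full _ hubr).mp husoj
    have hpos : ∀ t, 1 ≤ t → t ≤ 2*r - 1 → 1 ≤ walkPos s t := by
      intro t h1 h2
      have e1 := hsliceu (t-1) (by omega)
      rw [show 1 + (t-1) = t by omega, pos1] at e1
      have e2 := hunn (t-1) (by omega)
      omega
    have h2r0 : walkPos s (2*r) = 0 := by
      have hret : s ⟨2*r - 1, by omega⟩ = false := bwd_ret hr1 hrn p _ rfl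
      have h3 := walkPos_succ s (2*r-1) (by omega)
      rw [show 2*r - 1 + 1 = 2*r by omega, hret] at h3
      have h4 := hsliceu (2*(r-1)) le_rfl
      rw [show 1 + 2*(r-1) = 2*r - 1 by omega, pos1, hubr] at h4
      simp at h3
      omega
    have hslicev := walkPos_slice s p.2 (2*r) (by omega) hv
    have hbr : walkPos s (2*(n+1)) = 0 := by
      have e3 := hslicev (2*(n+1-r)) le_rfl
      rw [show 2*r + 2*(n+1-r) = 2*(n+1) by omega, hvbr, h2r0] at e3
      omega
    have hfirst : ∀ m < 2*r, (0 < walkPos s m ∨ 0 < walkPos s (m+1)) := by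
      intro m hm
      rcases Nat.eq_zero_or_pos m with h | h
      · right; rw [h, pos1]; omega
      · left; have := hpos m (by omega) (by omega); omega
    have hsplit := soj_split s p.2 (show 2*r + 2*(n+1-r) = 2*(n+1) by omega) hv h2r0 hfirst
    rw [Finset.mem_coe, Finset.mem_filter]
    refine ⟨Finset.mem_univ _, ⟨hbr, by rw [hsplit, hvsoj]; omega⟩, ?_, hs0⟩
    exact fr_eq_iff s (2*r) (by omega) h2r0
      (fun t h1 h2 => by have := hpos t (by omega) (by omega); omega)
  · -- left inverse
    intro s hs
    rw [Finset.mem_coe, Finset.mem_filter] at hs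
    obtain ⟨-, ⟨hbr, hsoj⟩, hfr, hs0⟩ := hs
    obtain ⟨⟨-, h2r0⟩, hmin, -⟩ := fr_spec s (by omega) hbr
    rw [hfr] at h2r0 hmin
    obtain ⟨-, -, hret⟩ := pos_fiber_facts hr1 hrn s hs0 h2r0 hmin
    funext i
    rcases Nat.eq_zero_or_pos i.1 with h | h
    · rw [bwd_zero hr1 hrn _ i h, ← hs0]
      congr 1
      exact Fin.ext h.symm
    · by_cases h2 : i.1 < 2*r - 1
      · rw [bwd_mid hr1 hrn _ i h h2]
        show s ⟨1 + (i.1 - 1), _⟩ = s i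
        congr 1
        exact Fin.ext (show 1 + (i.1 - 1) = i.1 by omega)
      · by_cases h3 : i.1 = 2*r - 1
        · rw [bwd_ret hr1 hrn _ i h3, ← hret]
          congr 1
          exact Fin.ext (show 2*r - 1 = i.1 by omega)
        · rw [bwd_tail hr1 hrn _ i (by omega)]
          show s ⟨2*r + (i.1 - 2*r), _⟩ = s i
          congr 1
          exact Fin.ext (show 2*r + (i.1 - 2*r) = i.1 by omega)
  · -- right inverse
    intro p hp
    refine Prod.ext ?_ ?_
    · funext i
      show bwd n r hr1 hrn p ⟨1 + i.1, _⟩ = p.1 i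
      rw [bwd_mid hr1 hrn p ⟨1 + i.1, by omega⟩
        (show 1 ≤ 1 + i.1 by omega) (show 1 + i.1 < 2*r - 1 by omega)]
      exact mk_apply_eq p.1 i _ _ (by simp only [Fin.val_mk]; omega)
    · funext i
      show bwd n r hr1 hrn p ⟨2*r + i.1, _⟩ = p.2 i
      rw [bwd_tail hr1 hrn p ⟨2*r + i.1, by omega⟩
        (show 2*r ≤ 2*r + i.1 by omega)]
      exact mk_apply_eq p.2 i _ _ (by simp only [Fin.val_mk]; omega)
end Fiber

lemma fr_neg {N : ℕ} (s : Fin N → Bool) : fr (fun i => !(s i)) = fr s := by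
  rw [fr, fr]
  congr 1
  ext t
  simp [walkPos_neg, neg_eq_zero]

lemma fiber_neg_card {n r : ℕ} (k : ℕ) (hk : k ≤ n+1) :
    ((Finset.univ : Finset (Fin (2*(n+1)) → Bool)).filter
      (fun s => (walkPos s (2*(n+1)) = 0 ∧ sojournTime s = 2*k) ∧ fr s = 2*r ∧
        s ⟨0, by omega⟩ = false)).card
    = ((Finset.univ : Finset (Fin (2*(n+1)) → Bool)).filter
      (fun s => (walkPos s (2*(n+1)) = 0 ∧ sojournTime s = 2*(n+1-k)) ∧ fr s = 2*r ∧
        s ⟨0, by omega⟩ = true)).card := by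
  refine Finset.card_nbij' (fun s => fun i => !(s i)) (fun s => fun i => !(s i)) ?_ ?_ ?_ ?_
  · intro s hs
    rw [Finset.mem_coe, Finset.mem_filter] at hs
    rw [Finset.mem_coe, Finset.mem_filter]
    obtain ⟨-, ⟨hbr, hsoj⟩, hfr, hs0⟩ := hs
    have hle := soj_le s
    refine ⟨Finset.mem_univ _, ⟨by rw [walkPos_neg, hbr]; ring, ?_⟩, fr_neg s ▸ hfr, by simp; exact hs0⟩
    rw [soj_neg, hsoj]
    omega
  · intro s hs
    rw [Finset.mem_coe, Finset.mem_filter] at hs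
    rw [Finset.mem_coe, Finset.mem_filter]
    obtain ⟨-, ⟨hbr, hsoj⟩, hfr, hs0⟩ := hs
    have hle := soj_le s
    refine ⟨Finset.mem_univ _, ⟨by rw [walkPos_neg, hbr]; ring, ?_⟩, fr_neg s ▸ hfr, by simp; exact hs0⟩
    rw [soj_neg, hsoj]
    omega
  · intro s _; funext i; simp
  · intro s _; funext i; simp

lemma fiber_true_card {n r : ℕ} (hr1 : 1 ≤ r) (hrn : r ≤ n+1) (k : ℕ) (hk : k ≤ n+1) :
    ((Finset.univ : Finset (Fin (2*(n+1)) → Bool)).filter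
      (fun s => (walkPos s (2*(n+1)) = 0 ∧ sojournTime s = 2*k) ∧ fr s = 2*r ∧
        s ⟨0, by omega⟩ = true)).card
    = if r ≤ k then Bcnt (r-1) (r-1) * Bcnt (n+1-r) (k-r) else 0 := by
  by_cases hrk : r ≤ k
  · rw [if_pos hrk]
    exact fiber_pos_card hr1 hrn k hrk hk
  · rw [if_neg hrk, Finset.card_eq_zero, Finset.eq_empty_iff_forall_notMem]
    intro s hs
    rw [Finset.mem_filter] at hs
    obtain ⟨-, ⟨hbr, hsoj⟩, hfr, hs0⟩ := hs
    obtain ⟨⟨-, h2r0⟩, hmin, -⟩ := fr_spec s (by omega) hbr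
    rw [hfr] at h2r0 hmin
    obtain ⟨hpos, -, -⟩ := pos_fiber_facts hr1 hrn s hs0 h2r0 hmin
    have pos1 : walkPos s 1 = 1 := walkPos_one s (by omega) hs0
    have hsub : Finset.range (2*r) ⊆ (Finset.range (2*(n+1))).filter
        (fun m => 0 < walkPos s m ∨ 0 < walkPos s (m + 1)) := by
      intro m hm
      rw [Finset.mem_range] at hm
      rw [Finset.mem_filter, Finset.mem_range]
      refine ⟨by omega, ?_⟩
      rcases Nat.eq_zero_or_pos m with h | h
      · right; rw [h, pos1]; omega
      · left; have := hpos m (by omega) (by omega); omega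
    have hcard := Finset.card_le_card hsub
    rw [Finset.card_range] at hcard
    rw [sojournTime] at hsoj
    omega

lemma fr_even {N : ℕ} (s : Fin N → Bool) (hN : 0 < N) (hbr : walkPos s N = 0) :
    fr s % 2 = 0 := by
  obtain ⟨⟨-, h0⟩, -, hle⟩ := fr_spec s hN hbr
  obtain ⟨c, hc⟩ := walkPos_parity s (fr s) hle
  rw [h0] at hc
  omega

lemma pos2 (n : ℕ) : 0 < 2*(n+1) := by omega

lemma Bcnt_rec (n k : ℕ) (hk : k ≤ n+1) :
    Bcnt (n+1) k =
      (∑ r ∈ Finset.range (n+2),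
        if 1 ≤ r ∧ r ≤ k then Bcnt (r-1) (r-1) * Bcnt (n+1-r) (k-r) else 0)
    + (∑ r ∈ Finset.range (n+2),
        if 1 ≤ r ∧ r ≤ n+1-k then Bcnt (r-1) (r-1) * Bcnt (n+1-r) (n+1-k-r) else 0) := by
  have hfib : ∀ r ∈ Finset.range (n+2), ∀ b : Bool,
      ((Finset.univ.filter (fun s : Fin (2*(n+1)) → Bool =>
        walkPos s (2*(n+1)) = 0 ∧ sojournTime s = 2*k)).filter
        (fun s => (fr s / 2, s ⟨0, pos2 n⟩) = (r, b))).card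
      = ((Finset.univ : Finset (Fin (2*(n+1)) → Bool)).filter
        (fun s => (walkPos s (2*(n+1)) = 0 ∧ sojournTime s = 2*k) ∧ fr s = 2*r ∧
          s ⟨0, pos2 n⟩ = b)).card := by
    intro r hr b
    rw [Finset.filter_filter]
    congr 1
    apply Finset.filter_congr
    intro s _
    constructor
    · rintro ⟨⟨hbr, hsoj⟩, hp⟩
      rw [Prod.mk.injEq] at hp
      have he := fr_even s (by omega) hbr
      exact ⟨⟨hbr, hsoj⟩, by omega, hp.2⟩
    · rintro ⟨⟨hbr, hsoj⟩, hfr, hb⟩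
      rw [Prod.mk.injEq]
      exact ⟨⟨hbr, hsoj⟩, by omega, hb⟩
  have hzero : ∀ b : Bool,
      ((Finset.univ : Finset (Fin (2*(n+1)) → Bool)).filter
        (fun s => (walkPos s (2*(n+1)) = 0 ∧ sojournTime s = 2*k) ∧ fr s = 2*0 ∧
          s ⟨0, pos2 n⟩ = b)).card = 0 := by
    intro b
    rw [Finset.card_eq_zero, Finset.eq_empty_iff_forall_notMem]
    intro s hs
    rw [Finset.mem_filter] at hs
    obtain ⟨-, ⟨hbr, -⟩, hfr, -⟩ := hs
    obtain ⟨⟨hpos, -⟩, -, -⟩ := fr_spec s (by omega) hbr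
    omega
  have hmem : ∀ s ∈ Finset.univ.filter (fun s : Fin (2*(n+1)) → Bool =>
      walkPos s (2*(n+1)) = 0 ∧ sojournTime s = 2*k),
      (fr s / 2, s ⟨0, pos2 n⟩) ∈ Finset.range (n+2) ×ˢ (Finset.univ : Finset Bool) := by
    intro s hs
    rw [Finset.mem_filter] at hs
    obtain ⟨-, hbr, -⟩ := hs
    rw [Finset.mem_product, Finset.mem_range]
    obtain ⟨-, -, hle⟩ := fr_spec s (by omega) hbr
    exact ⟨by omega, Finset.mem_univ _⟩
  have hmain := Finset.card_eq_sum_card_fiberwise hmem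
  rw [Bcnt, hmain, Finset.sum_product, ← Finset.sum_add_distrib]
  clear hmain hmem
  refine Finset.sum_congr rfl fun r hr => ?_
  rw [Fintype.sum_bool, hfib r hr true, hfib r hr false]
  rcases Nat.eq_zero_or_pos r with hr0 | hr0
  · subst hr0
    rw [hzero true, hzero false]
    simp
  · have hrn : r ≤ n+1 := by rw [Finset.mem_range] at hr; omega
    rw [fiber_neg_card k hk, fiber_true_card hr0 hrn k hk,
      fiber_true_card hr0 hrn (n+1-k) (by omega)]
    by_cases hk1 : r ≤ k <;> by_cases hk2 : r ≤ n+1-k <;>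
      simp [hk1, hk2, show 1 ≤ r from hr0]

lemma sum_ite_shift (n k : ℕ) (hk : k ≤ n+1) (F : ℕ → ℕ) :
    (∑ r ∈ Finset.range (n+2), if 1 ≤ r ∧ r ≤ k then F (r-1) else 0)
      = ∑ i ∈ Finset.range k, F i := by
  rw [← Finset.sum_filter]
  have : (Finset.range (n+2)).filter (fun r => 1 ≤ r ∧ r ≤ k) = Finset.Ico 1 (k+1) := by
    ext r
    simp only [Finset.mem_filter, Finset.mem_range, Finset.mem_Ico]
    omega
  rw [this, Finset.sum_Ico_eq_sum_range]
  refine Finset.sum_congr (by rw [Nat.add_sub_cancel]) fun i _ => ?_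
  congr 1
  omega

theorem Bcnt_catalan : ∀ n, ∀ k, k ≤ n → Bcnt n k = catalan n := by
  intro n
  induction n using Nat.strong_induction_on with
  | _ n ih =>
    match n with
    | 0 =>
      intro k hk
      interval_cases k
      rw [Bcnt, catalan_zero, Finset.filter_true_of_mem]
      · simp
      · intro s _
        constructor
        · exact walkPos_zero s
        · simp [sojournTime]
    | Nat.succ m =>
      intro k hk
      show Bcnt (m+1) k = catalan (m+1)
      rw [Bcnt_rec m k hk]
      have hIH1 : ∀ r, 1 ≤ r → r ≤ k →
          Bcnt (r-1) (r-1) * Bcnt (m+1-r) (k-r) = catalan (r-1) * catalan (m-(r-1)) := by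
        intro r h1 h2
        rw [ih (r-1) (by omega) (r-1) le_rfl, ih (m+1-r) (by omega) (k-r) (by omega),
          show m+1-r = m-(r-1) by omega]
      have hIH2 : ∀ r, 1 ≤ r → r ≤ m+1-k →
          Bcnt (r-1) (r-1) * Bcnt (m+1-r) (m+1-k-r) = catalan (r-1) * catalan (m-(r-1)) := by
        intro r h1 h2
        rw [ih (r-1) (by omega) (r-1) le_rfl, ih (m+1-r) (by omega) (m+1-k-r) (by omega),
          show m+1-r = m-(r-1) by omega]
      have e1 : (∑ r ∈ Finset.range (m+2),
          if 1 ≤ r ∧ r ≤ k then Bcnt (r-1) (r-1) * Bcnt (m+1-r) (k-r) else 0)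
          = ∑ i ∈ Finset.range k, catalan i * catalan (m-i) := by
        rw [← sum_ite_shift m k hk (fun i => catalan i * catalan (m-i))]
        refine Finset.sum_congr rfl fun r _ => ?_
        by_cases h : 1 ≤ r ∧ r ≤ k
        · rw [if_pos h, if_pos h, hIH1 r h.1 h.2]
        · rw [if_neg h, if_neg h]
      have e2 : (∑ r ∈ Finset.range (m+2),
          if 1 ≤ r ∧ r ≤ m+1-k then Bcnt (r-1) (r-1) * Bcnt (m+1-r) (m+1-k-r) else 0)
          = ∑ i ∈ Finset.range (m+1-k), catalan i * catalan (m-i) := by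
        rw [← sum_ite_shift m (m+1-k) (by omega) (fun i => catalan i * catalan (m-i))]
        refine Finset.sum_congr rfl fun r _ => ?_
        by_cases h : 1 ≤ r ∧ r ≤ m+1-k
        · rw [if_pos h, if_pos h, hIH2 r h.1 h.2]
        · rw [if_neg h, if_neg h]
      rw [e1, e2]
      -- now: ∑_{i<k} g i + ∑_{i<m+1-k} g i = catalan (m+1)
      have hcat : catalan (m+1) = ∑ i ∈ Finset.range (m+1), catalan i * catalan (m-i) := by
        rw [catalan_succ, Finset.sum_range]
      have hsplit : ∑ i ∈ Finset.range (m+1), catalan i * catalan (m-i)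
          = (∑ i ∈ Finset.range k, catalan i * catalan (m-i))
          + ∑ i ∈ Finset.Ico k (m+1), catalan i * catalan (m-i) := by
        rw [Finset.range_eq_Ico, ← Finset.sum_Ico_consecutive _ (Nat.zero_le k) (by omega : k ≤ m+1),
          ← Finset.range_eq_Ico]
      have hrefl : ∑ i ∈ Finset.Ico k (m+1), catalan i * catalan (m-i)
          = ∑ i ∈ Finset.range (m+1-k), catalan i * catalan (m-i) := by
        rw [Finset.sum_Ico_eq_sum_range]
        rw [← Finset.sum_range_reflect (fun j => catalan (k+j) * catalan (m-(k+j))) (m+1-k)]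
        refine Finset.sum_congr rfl fun j hj => ?_
        rw [Finset.mem_range] at hj
        rw [show k + (m+1-k-1-j) = m - j by omega, show m - (m-j) = j by omega]
        ring
      omega

end CF

/-- Equidistribution theorem: among the `C(2n,n)` equally likely `2n`-step paths from the
origin back to the origin, the conditional probability of spending exactly `2k` time units
on the positive side is `1/(n+1)`, independently of `k`. -/
theorem stmt3 (n k : ℕ) (hk : k ≤ n) :
    (((Finset.univ : Finset (Fin (2 * n) → Bool)).filter
        (fun s => walkPos s (2 * n) = 0 ∧ sojournTime s = 2 * k)).card : ℝ)
        / Nat.choose (2 * n) n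
      = 1 / (n + 1) := by
  have hB : ((Finset.univ : Finset (Fin (2 * n) → Bool)).filter
        (fun s => walkPos s (2 * n) = 0 ∧ sojournTime s = 2 * k)).card = catalan n :=
    CF.Bcnt_catalan n k hk
  have hcb : (2*n).choose n = (n+1) * catalan n := (succ_mul_catalan_eq_centralBinom n).symm
  have hpos : 0 < catalan n := by
    by_contra h
    have h0 : catalan n = 0 := by omega
    have h1 := succ_mul_catalan_eq_centralBinom n
    rw [h0, Nat.mul_zero] at h1
    have h2 := Nat.centralBinom_pos n
    omega
  rw [hB, hcb]
  push_cast
  have hd1 : (0:ℝ) < ((n:ℝ)+1) * (catalan n : ℝ) := by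
    apply mul_pos
    · positivity
    · exact_mod_cast hpos
  rw [div_eq_div_iff hd1.ne' (by positivity)]
  ring
end
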